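/- For every ε > 0 and every unit vector ν ∈ ℝ⁴, the function c(t) := ∫_{ℝ⁴} U_{ε,tν}(x)²·U_{ε,−tν}(x)² dx is differentiable at every t > 0 with c'(t) < 0; in particular c is strictly decreasing on [0,∞). -/

import Mathlib

noncomputable section

open MeasureTheory Real RealInnerProductSpace

/-- Euclidean four-space. -/
abbrev E4 : Type := EuclideanSpace ℝ (Fin 4)

/-- The normalizing constant `c₄ = (6/π²)^(1/4)`. -/
def c4 : ℝ := (6 / Real.pi ^ 2) ^ ((1 : ℝ) / 4)

/-- The Sobolev constant `S₄ = 8/c₄²`. -/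
def S4 : ℝ := 8 / c4 ^ 2

/-- The standard (normalized) bubble `U(x) = c₄ (1+|x|²)⁻¹`. -/
def Ubub (x : E4) : ℝ := c4 * (1 + ‖x‖ ^ 2)⁻¹

/-- The rescaled/translated bubble `U_{ε,x₀}(x) = ε⁻¹ U((x - x₀)/ε)`. -/
def Ueps (ε : ℝ) (x₀ : E4) (x : E4) : ℝ := ε⁻¹ * Ubub (ε⁻¹ • (x - x₀))

/-- The double bubble `Û_{ε,x₀} = U_{ε,x₀} + U_{ε,-x₀}`. -/
def Uhat (ε : ℝ) (x₀ : E4) (x : E4) : ℝ := Ueps ε x₀ x + Ueps ε (-x₀) x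

/-- The first standard basis vector of `ℝ⁴`. -/
def e1 : E4 := EuclideanSpace.single (0 : Fin 4) (1 : ℝ)

/-- The Yamabe (Sobolev) quotient `Q(u) = 6 ∫ |∇u|² / (∫ u⁴)^{1/2}` on `ℝ⁴`. -/
def Qyam (u : E4 → ℝ) : ℝ :=
  6 * (∫ x : E4, ‖gradient u x‖ ^ 2) / Real.sqrt (∫ x : E4, (u x) ^ 4)

namespace Stmt4Aux

/-- `g b y = ((b + ‖y‖²)²)⁻¹`. -/
def g (b : ℝ) (x : E4) : ℝ := ((b + ‖x‖ ^ 2) ^ 2)⁻¹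

/-- derivative helper `g' b y = -2((b + ‖y‖²)³)⁻¹`. -/
def g' (b : ℝ) (x : E4) : ℝ := -2 * ((b + ‖x‖ ^ 2) ^ 3)⁻¹

def S1 (b : ℝ) (ν : E4) (t : ℝ) (x : E4) : ℝ :=
  g' b (x - t • ν) * (2 * t - 2 * ⟪x, ν⟫) * g b (x + t • ν)

def S2 (b : ℝ) (ν : E4) (t : ℝ) (x : E4) : ℝ :=
  g b (x - t • ν) * (g' b (x + t • ν) * (2 * t + 2 * ⟪x, ν⟫))

def Fd (b : ℝ) (ν : E4) (t : ℝ) (x : E4) : ℝ := S1 b ν t x + S2 b ν t x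

/-- The master constant. -/
def N0 (b R : ℝ) : ℝ := (2 + 2 * R ^ 2 / b) * (2 / b + 2)

def T1 (b : ℝ) (ν : E4) (t : ℝ) (x : E4) : ℝ :=
  g' b x * (-2 * ⟪x, ν⟫) * g b (x + (2 * t) • ν)

def T2 (b : ℝ) (ν : E4) (t : ℝ) (x : E4) : ℝ :=
  g b (x - (2 * t) • ν) * (g' b x * (2 * ⟪x, ν⟫))

variable {b : ℝ} {ν : E4}

lemma base_pos (hb : 0 < b) (x : E4) : 0 < b + ‖x‖ ^ 2 := by positivity

lemma g_pos (hb : 0 < b) (x : E4) : 0 < g b x := by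
  unfold g; positivity

lemma g_cont (hb : 0 < b) : Continuous (g b) := by
  unfold g
  have h : ∀ x : E4, (b + ‖x‖ ^ 2) ^ 2 ≠ 0 := fun x => by positivity
  exact ((continuous_const.add (continuous_norm.pow 2)).pow 2).inv₀ h

lemma g'_cont (hb : 0 < b) : Continuous (g' b) := by
  unfold g'
  have h : ∀ x : E4, (b + ‖x‖ ^ 2) ^ 3 ≠ 0 := fun x => by positivity
  exact continuous_const.mul (((continuous_const.add (continuous_norm.pow 2)).pow 3).inv₀ h)

/-- `(1+‖x‖)² ≤ (2/b+2)(b+‖x‖²)`. -/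
lemma base1 (hb : 0 < b) (x : E4) : (1 + ‖x‖) ^ 2 ≤ (2 / b + 2) * (b + ‖x‖ ^ 2) := by
  have h1 : (0:ℝ) ≤ ‖x‖ := norm_nonneg x
  have h2 : 2 / b * b = 2 := by field_simp
  nlinarith [sq_nonneg (1 - ‖x‖), sq_nonneg ‖x‖, div_pos (by norm_num : (0:ℝ) < 2) hb]

/-- shift comparison: for `‖a‖ ≤ R`, `b + ‖x‖² ≤ (2+2R²/b)(b+‖x-a‖²)`. -/
lemma base2 (hb : 0 < b) {R : ℝ} (hR : 0 ≤ R) {a : E4} (ha : ‖a‖ ≤ R) (x : E4) :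
    b + ‖x‖ ^ 2 ≤ (2 + 2 * R ^ 2 / b) * (b + ‖x - a‖ ^ 2) := by
  have h1 : ‖x‖ ≤ ‖x - a‖ + ‖a‖ := by
    simpa using norm_add_le (x - a) a
  have h2 : ‖x‖ ^ 2 ≤ 2 * ‖x - a‖ ^ 2 + 2 * R ^ 2 := by
    have h3 : ‖x‖ ≤ ‖x - a‖ + R := h1.trans (by linarith)
    nlinarith [norm_nonneg (x - a), norm_nonneg x, sq_nonneg (‖x - a‖ - R)]
  have h4 : 2 * R ^ 2 / b * b = 2 * R ^ 2 := by field_simp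
  nlinarith [norm_nonneg (x - a), sq_nonneg ‖x - a‖,
    div_nonneg (by positivity : (0:ℝ) ≤ 2 * R ^ 2) hb.le]

/-- master pointwise bound: `((b+‖x-a‖²)^k)⁻¹ ≤ N^k ((1+‖x‖)^(2k))⁻¹`. -/
lemma inv_shift_le (hb : 0 < b) {R : ℝ} (hR : 0 ≤ R) {a : E4} (ha : ‖a‖ ≤ R) (k : ℕ) (x : E4) :
    ((b + ‖x - a‖ ^ 2) ^ k)⁻¹ ≤
      ((2 + 2 * R ^ 2 / b) * (2 / b + 2)) ^ k * ((1 + ‖x‖) ^ (2 * k))⁻¹ := by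
  set N : ℝ := (2 + 2 * R ^ 2 / b) * (2 / b + 2) with hN
  have hM : 0 < 2 + 2 * R ^ 2 / b := by positivity
  have hc : 0 < 2 / b + 2 := by positivity
  have hNpos : 0 < N := mul_pos hM hc
  have hxa : 0 < b + ‖x - a‖ ^ 2 := base_pos hb _
  have hW : 0 < 1 + ‖x‖ := by positivity
  have key : (1 + ‖x‖) ^ (2 * k) ≤ N ^ k * (b + ‖x - a‖ ^ 2) ^ k := by
    have h1 : (1 + ‖x‖) ^ 2 ≤ N * (b + ‖x - a‖ ^ 2) := by
      calc (1 + ‖x‖) ^ 2 ≤ (2 / b + 2) * (b + ‖x‖ ^ 2) := base1 hb x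
        _ ≤ (2 / b + 2) * ((2 + 2 * R ^ 2 / b) * (b + ‖x - a‖ ^ 2)) := by
            exact mul_le_mul_of_nonneg_left (base2 hb hR ha x) hc.le
        _ = N * (b + ‖x - a‖ ^ 2) := by ring
    calc (1 + ‖x‖) ^ (2 * k) = ((1 + ‖x‖) ^ 2) ^ k := by rw [pow_mul]
      _ ≤ (N * (b + ‖x - a‖ ^ 2)) ^ k := pow_le_pow_left₀ (by positivity) h1 k
      _ = N ^ k * (b + ‖x - a‖ ^ 2) ^ k := mul_pow _ _ _
  calc ((b + ‖x - a‖ ^ 2) ^ k)⁻¹ = 1 / (b + ‖x - a‖ ^ 2) ^ k := (one_div _).symm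
    _ ≤ N ^ k / (1 + ‖x‖) ^ (2 * k) := by
        rw [div_le_div_iff₀ (by positivity) (by positivity)]; linarith [key]
    _ = N ^ k * ((1 + ‖x‖) ^ (2 * k))⁻¹ := div_eq_mul_inv _ _


lemma integrable_master {k : ℕ} (hk : 4 < k) :
    Integrable (fun x : E4 => ((1 + ‖x‖) ^ k)⁻¹) := by
  have h := integrable_one_add_norm (E := E4) (μ := volume) (r := k)
    (by rw [finrank_euclideanSpace_fin]; exact_mod_cast hk)
  refine h.congr (Filter.Eventually.of_forall fun x => ?_)
  simp only []
  rw [show ((1:ℝ) + ‖x‖) ^ (-(k:ℝ)) = (((1:ℝ) + ‖x‖) ^ (k:ℝ))⁻¹ from Real.rpow_neg (by positivity) _, Real.rpow_natCast]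

lemma integrable_of_bound (f : E4 → ℝ) (hf : AEStronglyMeasurable f (volume : Measure E4))
    (C : ℝ) {k : ℕ} (hk : 4 < k) (h : ∀ x, |f x| ≤ C * ((1 + ‖x‖) ^ k)⁻¹) :
    Integrable f := by
  refine Integrable.mono' ((integrable_master hk).const_mul C) hf
    (Filter.Eventually.of_forall fun x => ?_)
  simpa [Real.norm_eq_abs] using h x


lemma norm_sub_smul (hν : ‖ν‖ = 1) (x : E4) (u : ℝ) :
    ‖x - u • ν‖ ^ 2 = ‖x‖ ^ 2 - 2 * ⟪x, ν⟫ * u + u ^ 2 := by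
  rw [norm_sub_sq_real, real_inner_smul_right, norm_smul, Real.norm_eq_abs, hν, mul_one, sq_abs]
  ring

lemma norm_add_smul (hν : ‖ν‖ = 1) (x : E4) (u : ℝ) :
    ‖x + u • ν‖ ^ 2 = ‖x‖ ^ 2 + 2 * ⟪x, ν⟫ * u + u ^ 2 := by
  rw [norm_add_sq_real, real_inner_smul_right, norm_smul, Real.norm_eq_abs, hν, mul_one, sq_abs]
  ring

lemma g'_abs (hb : 0 < b) (x : E4) : |g' b x| = 2 * ((b + ‖x‖ ^ 2) ^ 3)⁻¹ := by
  have h := base_pos hb x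
  rw [g', abs_mul, abs_of_pos (by positivity : (0:ℝ) < ((b + ‖x‖ ^ 2) ^ 3)⁻¹)]
  norm_num


lemma N0_pos (hb : 0 < b) {R : ℝ} (hR : 0 ≤ R) : 0 < N0 b R := by unfold N0; positivity

lemma inner_abs_le (hν : ‖ν‖ = 1) (x : E4) : |⟪x, ν⟫| ≤ ‖x‖ := by
  simpa [hν] using abs_real_inner_le_norm x ν

lemma S1_bound (hb : 0 < b) (hν : ‖ν‖ = 1) {R s : ℝ} (hR : 0 ≤ R) (hs : |s| ≤ R) (x : E4) :
    |S1 b ν s x| ≤ 4 * (R + 1) * N0 b R ^ 5 * ((1 + ‖x‖) ^ 9)⁻¹ := by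
  have hW : (0:ℝ) < 1 + ‖x‖ := by positivity
  have hsub : ‖s • ν‖ ≤ R := by rw [norm_smul, Real.norm_eq_abs, hν, mul_one]; exact hs
  have hsub' : ‖-(s • ν)‖ ≤ R := by rwa [norm_neg]
  have f1 : |g' b (x - s • ν)| ≤ 2 * (N0 b R ^ 3 * ((1 + ‖x‖) ^ 6)⁻¹) := by
    rw [g'_abs hb]
    have := inv_shift_le hb hR hsub 3 x
    unfold N0
    norm_num at this ⊢
    linarith
  have f2 : |2 * s - 2 * ⟪x, ν⟫| ≤ (2 * R + 2) * (1 + ‖x‖) := by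
    have h1 : |2 * s - 2 * ⟪x, ν⟫| ≤ 2 * |s| + 2 * |⟪x, ν⟫| := by
      calc |2 * s - 2 * ⟪x, ν⟫| ≤ |2 * s| + |2 * ⟪x, ν⟫| := abs_sub _ _
        _ = 2 * |s| + 2 * |⟪x, ν⟫| := by rw [abs_mul, abs_mul]; norm_num
    have h2 := inner_abs_le hν x
    nlinarith [norm_nonneg x]
  have f3 : g b (x + s • ν) ≤ N0 b R ^ 2 * ((1 + ‖x‖) ^ 4)⁻¹ := by
    rw [g, show x + s • ν = x - -(s • ν) by rw [sub_neg_eq_add]]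
    have := inv_shift_le hb hR hsub' 2 x
    unfold N0
    norm_num at this ⊢
    exact this
  have hg3 : (0:ℝ) ≤ g b (x + s • ν) := le_of_lt (by rw [g]; have := base_pos hb (x + s • ν); positivity)
  calc |S1 b ν s x| = |g' b (x - s • ν)| * |2 * s - 2 * ⟪x, ν⟫| * g b (x + s • ν) := by
        rw [S1, abs_mul, abs_mul, abs_of_nonneg hg3]
    _ ≤ (2 * (N0 b R ^ 3 * ((1 + ‖x‖) ^ 6)⁻¹)) * ((2 * R + 2) * (1 + ‖x‖)) *
          (N0 b R ^ 2 * ((1 + ‖x‖) ^ 4)⁻¹) := by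
        have hN := N0_pos hb hR
        have hA0 : (0:ℝ) ≤ 2 * (N0 b R ^ 3 * ((1 + ‖x‖) ^ 6)⁻¹) :=
          mul_nonneg (by norm_num) (mul_nonneg (pow_pos hN 3).le (by positivity))
        have hB0 : (0:ℝ) ≤ (2 * R + 2) * (1 + ‖x‖) := by positivity
        exact mul_le_mul (mul_le_mul f1 f2 (abs_nonneg _) hA0) f3 hg3 (mul_nonneg hA0 hB0)
    _ = 4 * (R + 1) * N0 b R ^ 5 * ((1 + ‖x‖) ^ 9)⁻¹ := by
        field_simp
        ring

lemma S2_bound (hb : 0 < b) (hν : ‖ν‖ = 1) {R s : ℝ} (hR : 0 ≤ R) (hs : |s| ≤ R) (x : E4) :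
    |S2 b ν s x| ≤ 4 * (R + 1) * N0 b R ^ 5 * ((1 + ‖x‖) ^ 9)⁻¹ := by
  have hW : (0:ℝ) < 1 + ‖x‖ := by positivity
  have hsub : ‖s • ν‖ ≤ R := by rw [norm_smul, Real.norm_eq_abs, hν, mul_one]; exact hs
  have hsub' : ‖-(s • ν)‖ ≤ R := by rwa [norm_neg]
  have f1 : g b (x - s • ν) ≤ N0 b R ^ 2 * ((1 + ‖x‖) ^ 4)⁻¹ := by
    rw [g]
    have := inv_shift_le hb hR hsub 2 x
    unfold N0
    norm_num at this ⊢
    exact this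
  have f2 : |g' b (x + s • ν)| ≤ 2 * (N0 b R ^ 3 * ((1 + ‖x‖) ^ 6)⁻¹) := by
    rw [g'_abs hb, show x + s • ν = x - -(s • ν) by rw [sub_neg_eq_add]]
    have := inv_shift_le hb hR hsub' 3 x
    unfold N0
    norm_num at this ⊢
    linarith
  have f3 : |2 * s + 2 * ⟪x, ν⟫| ≤ (2 * R + 2) * (1 + ‖x‖) := by
    have h1 : |2 * s + 2 * ⟪x, ν⟫| ≤ 2 * |s| + 2 * |⟪x, ν⟫| := by
      calc |2 * s + 2 * ⟪x, ν⟫| ≤ |2 * s| + |2 * ⟪x, ν⟫| := abs_add_le _ _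
        _ = 2 * |s| + 2 * |⟪x, ν⟫| := by rw [abs_mul, abs_mul]; norm_num
    have h2 := inner_abs_le hν x
    nlinarith [norm_nonneg x]
  have hg1 : (0:ℝ) ≤ g b (x - s • ν) := le_of_lt (by rw [g]; have := base_pos hb (x - s • ν); positivity)
  calc |S2 b ν s x| = g b (x - s • ν) * (|g' b (x + s • ν)| * |2 * s + 2 * ⟪x, ν⟫|) := by
        rw [S2, abs_mul, abs_mul, abs_of_nonneg hg1]
    _ ≤ (N0 b R ^ 2 * ((1 + ‖x‖) ^ 4)⁻¹) * ((2 * (N0 b R ^ 3 * ((1 + ‖x‖) ^ 6)⁻¹)) *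
          ((2 * R + 2) * (1 + ‖x‖))) := by
        have hN := N0_pos hb hR
        have hA0 : (0:ℝ) ≤ 2 * (N0 b R ^ 3 * ((1 + ‖x‖) ^ 6)⁻¹) :=
          mul_nonneg (by norm_num) (mul_nonneg (pow_pos hN 3).le (by positivity))
        have hC0 : (0:ℝ) ≤ N0 b R ^ 2 * ((1 + ‖x‖) ^ 4)⁻¹ :=
          mul_nonneg (pow_pos hN 2).le (by positivity)
        exact mul_le_mul f1 (mul_le_mul f2 f3 (abs_nonneg _) hA0)
          (mul_nonneg (abs_nonneg _) (abs_nonneg _)) hC0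
    _ = 4 * (R + 1) * N0 b R ^ 5 * ((1 + ‖x‖) ^ 9)⁻¹ := by
        field_simp
        ring

lemma Fd_bound (hb : 0 < b) (hν : ‖ν‖ = 1) {R s : ℝ} (hR : 0 ≤ R) (hs : |s| ≤ R) (x : E4) :
    |Fd b ν s x| ≤ 8 * (R + 1) * N0 b R ^ 5 * ((1 + ‖x‖) ^ 9)⁻¹ := by
  calc |Fd b ν s x| ≤ |S1 b ν s x| + |S2 b ν s x| := abs_add_le _ _
    _ ≤ 8 * (R + 1) * N0 b R ^ 5 * ((1 + ‖x‖) ^ 9)⁻¹ := by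
      have := S1_bound hb hν hR hs x
      have := S2_bound hb hν hR hs x
      linarith

lemma prod_bound (hb : 0 < b) (hν : ‖ν‖ = 1) {R s : ℝ} (hR : 0 ≤ R) (hs : |s| ≤ R) (x : E4) :
    |g b (x - s • ν) * g b (x + s • ν)| ≤ N0 b R ^ 4 * ((1 + ‖x‖) ^ 8)⁻¹ := by
  have hW : (0:ℝ) < 1 + ‖x‖ := by positivity
  have hsub : ‖s • ν‖ ≤ R := by rw [norm_smul, Real.norm_eq_abs, hν, mul_one]; exact hs
  have hsub' : ‖-(s • ν)‖ ≤ R := by rwa [norm_neg]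
  have f1 : g b (x - s • ν) ≤ N0 b R ^ 2 * ((1 + ‖x‖) ^ 4)⁻¹ := by
    rw [g]
    have := inv_shift_le hb hR hsub 2 x
    unfold N0
    norm_num at this ⊢
    exact this
  have f3 : g b (x + s • ν) ≤ N0 b R ^ 2 * ((1 + ‖x‖) ^ 4)⁻¹ := by
    rw [g, show x + s • ν = x - -(s • ν) by rw [sub_neg_eq_add]]
    have := inv_shift_le hb hR hsub' 2 x
    unfold N0
    norm_num at this ⊢
    exact this
  have hg1 : (0:ℝ) ≤ g b (x - s • ν) := le_of_lt (by rw [g]; have := base_pos hb (x - s • ν); positivity)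
  have hg3 : (0:ℝ) ≤ g b (x + s • ν) := le_of_lt (by rw [g]; have := base_pos hb (x + s • ν); positivity)
  calc |g b (x - s • ν) * g b (x + s • ν)| = g b (x - s • ν) * g b (x + s • ν) := by
        rw [abs_mul, abs_of_nonneg hg1, abs_of_nonneg hg3]
    _ ≤ (N0 b R ^ 2 * ((1 + ‖x‖) ^ 4)⁻¹) * (N0 b R ^ 2 * ((1 + ‖x‖) ^ 4)⁻¹) := by
        have hN := N0_pos hb hR
        have hC0 : (0:ℝ) ≤ N0 b R ^ 2 * ((1 + ‖x‖) ^ 4)⁻¹ :=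
          mul_nonneg (pow_pos hN 2).le (by positivity)
        exact mul_le_mul f1 f3 hg3 hC0
    _ = N0 b R ^ 4 * ((1 + ‖x‖) ^ 8)⁻¹ := by field_simp


lemma F_cont (hb : 0 < b) (s : ℝ) :
    Continuous (fun x : E4 => g b (x - s • ν) * g b (x + s • ν)) :=
  (((g_cont hb).comp (continuous_id.sub continuous_const)).mul
    ((g_cont hb).comp (continuous_id.add continuous_const)))

lemma Fd_cont (hb : 0 < b) (s : ℝ) : Continuous (Fd b ν s) := by
  unfold Fd S1 S2
  have h1 : Continuous fun x : E4 => ⟪x, ν⟫ := continuous_id.inner continuous_const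
  exact ((((g'_cont hb).comp (continuous_id.sub continuous_const)).mul
      ((continuous_const.sub (continuous_const.mul h1)))).mul
      ((g_cont hb).comp (continuous_id.add continuous_const))).add
    (((g_cont hb).comp (continuous_id.sub continuous_const)).mul
      (((g'_cont hb).comp (continuous_id.add continuous_const)).mul
        (continuous_const.add (continuous_const.mul h1))))

lemma hasDerivAt_pointwise (hb : 0 < b) (hν : ‖ν‖ = 1) (x : E4) (s : ℝ) :
    HasDerivAt (fun u : ℝ => g b (x - u • ν) * g b (x + u • ν)) (Fd b ν s x) s := by
  set q : ℝ := ‖x‖ ^ 2 with hq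
  set p : ℝ := ⟪x, ν⟫ with hp
  have hkey : (fun u : ℝ => g b (x - u • ν) * g b (x + u • ν)) =
      fun u : ℝ => ((b + (q - 2 * p * u + u ^ 2)) ^ 2)⁻¹ *
        ((b + (q + 2 * p * u + u ^ 2)) ^ 2)⁻¹ := by
    funext u
    rw [g, g, norm_sub_smul hν, norm_add_smul hν]
  have hApos : 0 < b + (q - 2 * p * s + s ^ 2) := by
    have := base_pos hb (x - s • ν)
    rwa [norm_sub_smul hν] at this
  have hBpos : 0 < b + (q + 2 * p * s + s ^ 2) := by
    have := base_pos hb (x + s • ν)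
    rwa [norm_add_smul hν] at this
  have dA : HasDerivAt (fun u : ℝ => b + (q - 2 * p * u + u ^ 2)) (-(2 * p) + 2 * s) s := by
    have h2 : HasDerivAt (fun u : ℝ => u ^ 2) (2 * s) s := by
      simpa using hasDerivAt_pow 2 s
    have h3 : HasDerivAt (fun u : ℝ => 2 * p * u) (2 * p) s := by
      simpa using (hasDerivAt_id s).const_mul (2 * p)
    have := (h3.neg.add h2).const_add (b + q)
    refine HasDerivAt.congr_of_eventuallyEq this (Filter.Eventually.of_forall fun u => ?_)
    simp only [Pi.add_apply, Pi.neg_apply]; ring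
  have dB : HasDerivAt (fun u : ℝ => b + (q + 2 * p * u + u ^ 2)) (2 * p + 2 * s) s := by
    have h2 : HasDerivAt (fun u : ℝ => u ^ 2) (2 * s) s := by
      simpa using hasDerivAt_pow 2 s
    have h3 : HasDerivAt (fun u : ℝ => 2 * p * u) (2 * p) s := by
      simpa using (hasDerivAt_id s).const_mul (2 * p)
    have := (h3.add h2).const_add (b + q)
    refine HasDerivAt.congr_of_eventuallyEq this (Filter.Eventually.of_forall fun u => ?_)
    simp only [Pi.add_apply]; ring
  have dg1 := ((dA.fun_pow 2).fun_inv (pow_ne_zero _ hApos.ne'))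
  have dg2 := ((dB.fun_pow 2).fun_inv (pow_ne_zero _ hBpos.ne'))
  rw [hkey]
  refine (dg1.fun_mul dg2).congr_deriv ?_
  rw [Fd, S1, S2, g, g, g', g', norm_sub_smul hν, norm_add_smul hν]
  rw [← hq, ← hp]
  have hA : b + (q - 2 * p * s + s ^ 2) ≠ 0 := ne_of_gt hApos
  have hB : b + (q + 2 * p * s + s ^ 2) ≠ 0 := ne_of_gt hBpos
  field_simp
  ring

lemma J_hasDerivAt (hb : 0 < b) (hν : ‖ν‖ = 1) (t₀ : ℝ) :
    HasDerivAt (fun s : ℝ => ∫ x : E4, g b (x - s • ν) * g b (x + s • ν))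
      (∫ x : E4, Fd b ν t₀ x) t₀ := by
  set R : ℝ := |t₀| + 1 with hRdef
  have hR : 0 ≤ R := by positivity
  refine (hasDerivAt_integral_of_dominated_loc_of_deriv_le (μ := volume)
    (bound := fun x : E4 => 8 * (R + 1) * N0 b R ^ 5 * ((1 + ‖x‖) ^ 9)⁻¹)
    (F' := fun s x => Fd b ν s x) (Metric.ball_mem_nhds t₀ zero_lt_one) ?_ ?_ ?_ ?_ ?_ ?_).2
  · exact Filter.Eventually.of_forall fun s => (F_cont hb s).aestronglyMeasurable
  · exact integrable_of_bound _ (F_cont hb t₀).aestronglyMeasurable (N0 b R ^ 4)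
      (by norm_num : 4 < 8) (prod_bound hb hν hR (by rw [hRdef]; linarith [abs_nonneg t₀]))
  · exact (Fd_cont hb t₀).aestronglyMeasurable
  · refine Filter.Eventually.of_forall fun x => fun s hs => ?_
    have habs : |s| ≤ R := by
      have h1 : |s - t₀| < 1 := by simpa [Real.dist_eq] using hs
      have := abs_sub_abs_le_abs_sub s t₀
      simp only [hRdef]
      linarith
    simpa [Real.norm_eq_abs] using Fd_bound hb hν hR habs x
  · exact (integrable_master (by norm_num : 4 < 9)).const_mul _
  · exact Filter.Eventually.of_forall fun x s _ => hasDerivAt_pointwise hb hν x s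



lemma S1_cont (hb : 0 < b) (t : ℝ) : Continuous (S1 b ν t) := by
  unfold S1
  have h1 : Continuous fun x : E4 => ⟪x, ν⟫ := continuous_id.inner continuous_const
  exact (((g'_cont hb).comp (continuous_id.sub continuous_const)).mul
    (continuous_const.sub (continuous_const.mul h1))).mul
    ((g_cont hb).comp (continuous_id.add continuous_const))

lemma S2_cont (hb : 0 < b) (t : ℝ) : Continuous (S2 b ν t) := by
  unfold S2
  have h1 : Continuous fun x : E4 => ⟪x, ν⟫ := continuous_id.inner continuous_const
  exact ((g_cont hb).comp (continuous_id.sub continuous_const)).mul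
    (((g'_cont hb).comp (continuous_id.add continuous_const)).mul
      (continuous_const.add (continuous_const.mul h1)))

lemma T1_cont (hb : 0 < b) (t : ℝ) : Continuous (T1 b ν t) := by
  unfold T1
  have h1 : Continuous fun x : E4 => ⟪x, ν⟫ := continuous_id.inner continuous_const
  exact ((g'_cont hb).mul (continuous_const.mul h1)).mul
    ((g_cont hb).comp (continuous_id.add continuous_const))

lemma T2_cont (hb : 0 < b) (t : ℝ) : Continuous (T2 b ν t) := by
  unfold T2
  have h1 : Continuous fun x : E4 => ⟪x, ν⟫ := continuous_id.inner continuous_const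
  exact ((g_cont hb).comp (continuous_id.sub continuous_const)).mul
    ((g'_cont hb).mul (continuous_const.mul h1))

lemma T_bound (hb : 0 < b) (hν : ‖ν‖ = 1) {t : ℝ} (ht : 0 < t) (x : E4) :
    |g' b x * (2 * ⟪x, ν⟫)| ≤ 4 * N0 b (2 * t) ^ 3 * ((1 + ‖x‖) ^ 5)⁻¹ := by
  have hW : (0:ℝ) < 1 + ‖x‖ := by positivity
  have hR2 : (0:ℝ) ≤ 2 * t := by linarith
  have h0 : ‖(0 : E4)‖ ≤ 2 * t := by simp; linarith
  have f1 : |g' b x| ≤ 2 * (N0 b (2 * t) ^ 3 * ((1 + ‖x‖) ^ 6)⁻¹) := by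
    rw [g'_abs hb]
    have := inv_shift_le hb hR2 h0 3 x
    rw [sub_zero] at this
    unfold N0
    norm_num at this ⊢
    linarith
  have f2 : |2 * ⟪x, ν⟫| ≤ 2 * (1 + ‖x‖) := by
    rw [abs_mul]
    have := inner_abs_le hν x
    rw [abs_two]
    nlinarith [norm_nonneg x]
  have hN := N0_pos hb hR2
  calc |g' b x * (2 * ⟪x, ν⟫)| = |g' b x| * |2 * ⟪x, ν⟫| := abs_mul _ _
    _ ≤ (2 * (N0 b (2 * t) ^ 3 * ((1 + ‖x‖) ^ 6)⁻¹)) * (2 * (1 + ‖x‖)) := by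
        exact mul_le_mul f1 f2 (abs_nonneg _)
          (mul_nonneg (by norm_num) (mul_nonneg (pow_pos hN 3).le (by positivity)))
    _ = 4 * N0 b (2 * t) ^ 3 * ((1 + ‖x‖) ^ 5)⁻¹ := by field_simp; ring

lemma g_le_inv_b2 (hb : 0 < b) (x : E4) : g b x ≤ (b ^ 2)⁻¹ := by
  rw [g]
  have h := base_pos hb x
  have : b ^ 2 ≤ (b + ‖x‖ ^ 2) ^ 2 := by nlinarith [sq_nonneg ‖x‖, norm_nonneg x]
  exact inv_anti₀ (by positivity) this

lemma T1_bound (hb : 0 < b) (hν : ‖ν‖ = 1) {t : ℝ} (ht : 0 < t) (x : E4) :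
    |T1 b ν t x| ≤ (b ^ 2)⁻¹ * (4 * N0 b (2 * t) ^ 3) * ((1 + ‖x‖) ^ 5)⁻¹ := by
  have h := T_bound hb hν ht x
  have hg : g b (x + (2 * t) • ν) ≤ (b ^ 2)⁻¹ := g_le_inv_b2 hb _
  have hgpos := g_pos hb (x + (2 * t) • ν)
  calc |T1 b ν t x| = |g' b x * (2 * ⟪x, ν⟫)| * g b (x + (2 * t) • ν) := by
        rw [T1, abs_mul, abs_of_pos hgpos]
        congr 1
        rw [show g' b x * (-2 * ⟪x, ν⟫) = -(g' b x * (2 * ⟪x, ν⟫)) by ring, abs_neg]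
    _ ≤ (4 * N0 b (2 * t) ^ 3 * ((1 + ‖x‖) ^ 5)⁻¹) * (b ^ 2)⁻¹ := by
        have hN := N0_pos hb (by linarith : (0:ℝ) ≤ 2 * t)
        exact mul_le_mul h hg hgpos.le
          (mul_nonneg (mul_nonneg (by norm_num) (pow_pos hN 3).le) (by positivity))
    _ = (b ^ 2)⁻¹ * (4 * N0 b (2 * t) ^ 3) * ((1 + ‖x‖) ^ 5)⁻¹ := by ring

lemma T2_bound (hb : 0 < b) (hν : ‖ν‖ = 1) {t : ℝ} (ht : 0 < t) (x : E4) :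
    |T2 b ν t x| ≤ (b ^ 2)⁻¹ * (4 * N0 b (2 * t) ^ 3) * ((1 + ‖x‖) ^ 5)⁻¹ := by
  have h := T_bound hb hν ht x
  have hg : g b (x - (2 * t) • ν) ≤ (b ^ 2)⁻¹ := g_le_inv_b2 hb _
  have hgpos := g_pos hb (x - (2 * t) • ν)
  calc |T2 b ν t x| = g b (x - (2 * t) • ν) * |g' b x * (2 * ⟪x, ν⟫)| := by
        rw [T2, abs_mul, abs_of_pos hgpos]
    _ ≤ (b ^ 2)⁻¹ * (4 * N0 b (2 * t) ^ 3 * ((1 + ‖x‖) ^ 5)⁻¹) :=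
        mul_le_mul hg h (abs_nonneg _) (by positivity)
    _ = (b ^ 2)⁻¹ * (4 * N0 b (2 * t) ^ 3) * ((1 + ‖x‖) ^ 5)⁻¹ := by ring

lemma g_strict_mono (hb : 0 < b) {y z : E4} (h : ‖y‖ ^ 2 < ‖z‖ ^ 2) : g b z < g b y := by
  rw [g, g]
  have hy := base_pos hb y
  have hz := base_pos hb z
  apply inv_strictAnti₀ (by positivity)
  nlinarith

lemma g_mono (hb : 0 < b) {y z : E4} (h : ‖y‖ ^ 2 ≤ ‖z‖ ^ 2) : g b z ≤ g b y := by
  rcases eq_or_lt_of_le h with he | hlt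
  · rw [g, g, he]
  · exact (g_strict_mono hb hlt).le

lemma g'_neg (hb : 0 < b) (x : E4) : g' b x < 0 := by
  rw [g']
  have := base_pos hb x
  have : (0:ℝ) < ((b + ‖x‖ ^ 2) ^ 3)⁻¹ := by positivity
  nlinarith

/-- The combined integrand after translation and its sign. -/
lemma T_sum_nonpos (hb : 0 < b) (hν : ‖ν‖ = 1) {t : ℝ} (ht : 0 < t) (x : E4) :
    T1 b ν t x + T2 b ν t x ≤ 0 := by
  have hid : T1 b ν t x + T2 b ν t x =
      2 * ⟪x, ν⟫ * g' b x * (g b (x - (2 * t) • ν) - g b (x + (2 * t) • ν)) := by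
    rw [T1, T2]; ring
  rw [hid]
  have hg' := g'_neg hb x
  have hsub := norm_sub_smul hν x (2 * t)
  have hadd := norm_add_smul hν x (2 * t)
  rcases le_or_gt 0 ⟪x, ν⟫ with hple | hplt
  · have hΔ : 0 ≤ g b (x - (2 * t) • ν) - g b (x + (2 * t) • ν) := by
      have : ‖x - (2 * t) • ν‖ ^ 2 ≤ ‖x + (2 * t) • ν‖ ^ 2 := by
        rw [hsub, hadd]; nlinarith
      linarith [g_mono hb this]
    nlinarith [mul_nonneg (mul_nonneg (by linarith : (0:ℝ) ≤ 2 * ⟪x, ν⟫) hΔ)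
      (by linarith : (0:ℝ) ≤ -g' b x)]
  · have hΔ : g b (x - (2 * t) • ν) - g b (x + (2 * t) • ν) ≤ 0 := by
      have : ‖x + (2 * t) • ν‖ ^ 2 ≤ ‖x - (2 * t) • ν‖ ^ 2 := by
        rw [hsub, hadd]; nlinarith
      linarith [g_mono hb this]
    nlinarith [mul_nonneg (mul_nonneg (by linarith : (0:ℝ) ≤ -(2 * ⟪x, ν⟫))
      (by linarith : (0:ℝ) ≤ -(g b (x - (2 * t) • ν) - g b (x + (2 * t) • ν))))
      (by linarith : (0:ℝ) ≤ -g' b x)]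

lemma T_sum_neg (hb : 0 < b) (hν : ‖ν‖ = 1) {t : ℝ} (ht : 0 < t) (x : E4)
    (hx : ⟪x, ν⟫ ≠ 0) : T1 b ν t x + T2 b ν t x < 0 := by
  have hid : T1 b ν t x + T2 b ν t x =
      2 * ⟪x, ν⟫ * g' b x * (g b (x - (2 * t) • ν) - g b (x + (2 * t) • ν)) := by
    rw [T1, T2]; ring
  rw [hid]
  have hg' := g'_neg hb x
  have hsub := norm_sub_smul hν x (2 * t)
  have hadd := norm_add_smul hν x (2 * t)
  rcases lt_or_gt_of_ne hx with hplt | hpgt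
  · have hΔ : g b (x - (2 * t) • ν) - g b (x + (2 * t) • ν) < 0 := by
      have : ‖x + (2 * t) • ν‖ ^ 2 < ‖x - (2 * t) • ν‖ ^ 2 := by
        rw [hsub, hadd]; nlinarith
      linarith [g_strict_mono hb this]
    nlinarith [mul_pos (mul_pos (by linarith : (0:ℝ) < -(2 * ⟪x, ν⟫))
      (by linarith : (0:ℝ) < -(g b (x - (2 * t) • ν) - g b (x + (2 * t) • ν))))
      (by linarith : (0:ℝ) < -g' b x)]
  · have hΔ : 0 < g b (x - (2 * t) • ν) - g b (x + (2 * t) • ν) := by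
      have : ‖x - (2 * t) • ν‖ ^ 2 < ‖x + (2 * t) • ν‖ ^ 2 := by
        rw [hsub, hadd]; nlinarith
      linarith [g_strict_mono hb this]
    nlinarith [mul_pos (mul_pos (by linarith : (0:ℝ) < 2 * ⟪x, ν⟫) hΔ)
      (by linarith : (0:ℝ) < -g' b x)]

lemma measure_inner_ne_zero (hν : ‖ν‖ = 1) :
    0 < (volume : Measure E4) {x : E4 | ⟪x, ν⟫ ≠ 0} := by
  by_contra hcon
  push_neg at hcon
  have h0 : (volume : Measure E4) {x : E4 | ⟪x, ν⟫ ≠ 0} = 0 := le_antisymm hcon zero_le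
  have hZ : (volume : Measure E4) {x : E4 | ⟪x, ν⟫ = 0} = 0 := by
    have hset : {x : E4 | ⟪x, ν⟫ = 0} = ((ℝ ∙ ν)ᗮ : Submodule ℝ E4) := by
      ext x
      simp only [Set.mem_setOf_eq, SetLike.mem_coe,
        Submodule.mem_orthogonal_singleton_iff_inner_right]
      rw [real_inner_comm]
    rw [hset]
    apply Measure.addHaar_submodule
    intro htop
    have : ν ∈ ((ℝ ∙ ν)ᗮ : Submodule ℝ E4) := htop ▸ Submodule.mem_top
    have h1 : ⟪ν, ν⟫ = 0 := Submodule.mem_orthogonal_singleton_iff_inner_right.mp this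
    rw [real_inner_self_eq_norm_sq, hν] at h1
    norm_num at h1
  have huniv : ({x : E4 | ⟪x, ν⟫ = 0} ∪ {x : E4 | ⟪x, ν⟫ ≠ 0}) = Set.univ := by
    rw [show {x : E4 | ⟪x, ν⟫ ≠ 0} = {x : E4 | ⟪x, ν⟫ = 0}ᶜ from rfl]
    exact Set.union_compl_self _
  have hle : (volume : Measure E4) Set.univ ≤ 0 := by
    calc (volume : Measure E4) Set.univ
        = volume ({x : E4 | ⟪x, ν⟫ = 0} ∪ {x : E4 | ⟪x, ν⟫ ≠ 0}) := by rw [huniv]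
      _ ≤ volume {x : E4 | ⟪x, ν⟫ = 0} + volume {x : E4 | ⟪x, ν⟫ ≠ 0} := measure_union_le _ _
      _ = 0 := by rw [hZ, h0, add_zero]
  exact isOpen_univ.measure_ne_zero volume Set.univ_nonempty (le_antisymm hle zero_le)

/-- The key sign lemma: `∫ Fd b ν t < 0` for `t > 0`. -/
lemma int_Fd_neg (hb : 0 < b) (hν : ‖ν‖ = 1) {t : ℝ} (ht : 0 < t) :
    (∫ x : E4, Fd b ν t x) < 0 := by
  have hRt : (0:ℝ) ≤ |t| + 1 := by positivity
  have htle : |t| ≤ |t| + 1 := by linarith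
  -- integrability of all four functions
  have hS1i : Integrable (S1 b ν t) :=
    integrable_of_bound _ (S1_cont hb t).aestronglyMeasurable _ (by norm_num : 4 < 9)
      (S1_bound hb hν hRt htle)
  have hS2i : Integrable (S2 b ν t) :=
    integrable_of_bound _ (S2_cont hb t).aestronglyMeasurable _ (by norm_num : 4 < 9)
      (S2_bound hb hν hRt htle)
  have hT1i : Integrable (T1 b ν t) :=
    integrable_of_bound _ (T1_cont hb t).aestronglyMeasurable _ (by norm_num : 4 < 5)
      (T1_bound hb hν ht)
  have hT2i : Integrable (T2 b ν t) :=
    integrable_of_bound _ (T2_cont hb t).aestronglyMeasurable _ (by norm_num : 4 < 5)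
      (T2_bound hb hν ht)
  -- translations
  have hshift1 : (∫ x : E4, S1 b ν t x) = ∫ x : E4, T1 b ν t x := by
    rw [← integral_add_right_eq_self (μ := volume) (fun x => S1 b ν t x) (t • ν)]
    refine integral_congr_ae (Filter.Eventually.of_forall fun x => ?_)
    show S1 b ν t (x + t • ν) = T1 b ν t x
    rw [S1, T1]
    have e1 : x + t • ν - t • ν = x := add_sub_cancel_right x (t • ν)
    have e2 : x + t • ν + t • ν = x + (2 * t) • ν := by
      rw [two_mul, add_smul]; abel
    have e3 : ⟪x + t • ν, ν⟫ = ⟪x, ν⟫ + t := by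
      rw [inner_add_left, real_inner_smul_left, real_inner_self_eq_norm_sq, hν]
      norm_num
    rw [e1, e2, e3]
    ring_nf
  have hshift2 : (∫ x : E4, S2 b ν t x) = ∫ x : E4, T2 b ν t x := by
    rw [← integral_add_right_eq_self (μ := volume) (fun x => S2 b ν t x) (-(t • ν))]
    refine integral_congr_ae (Filter.Eventually.of_forall fun x => ?_)
    show S2 b ν t (x + -(t • ν)) = T2 b ν t x
    rw [S2, T2]
    have e1 : x + -(t • ν) + t • ν = x := by abel
    have e2 : x + -(t • ν) - t • ν = x - (2 * t) • ν := by
      rw [two_mul, add_smul]; abel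
    have e3 : ⟪x + -(t • ν), ν⟫ = ⟪x, ν⟫ - t := by
      rw [inner_add_left, inner_neg_left, real_inner_smul_left,
        real_inner_self_eq_norm_sq, hν]
      norm_num
      ring
    rw [e1, e2, e3]
    ring_nf
  -- combine
  have hsplit : (∫ x : E4, Fd b ν t x) = ∫ x : E4, (T1 b ν t x + T2 b ν t x) := by
    calc (∫ x : E4, Fd b ν t x) = (∫ x : E4, S1 b ν t x) + ∫ x : E4, S2 b ν t x := by
          rw [← integral_add hS1i hS2i]; rfl
      _ = (∫ x : E4, T1 b ν t x) + ∫ x : E4, T2 b ν t x := by rw [hshift1, hshift2]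
      _ = ∫ x : E4, (T1 b ν t x + T2 b ν t x) := (integral_add hT1i hT2i).symm
  rw [hsplit]
  -- strict negativity
  have hInt : Integrable (fun x : E4 => -(T1 b ν t x + T2 b ν t x)) := (hT1i.add hT2i).neg
  have hpos : 0 < ∫ x : E4, -(T1 b ν t x + T2 b ν t x) := by
    rw [integral_pos_iff_support_of_nonneg
      (fun x => neg_nonneg.mpr (T_sum_nonpos hb hν ht x)) hInt]
    refine lt_of_lt_of_le (measure_inner_ne_zero hν) (measure_mono ?_)
    intro x hx
    simp only [Function.mem_support]
    have hstr := T_sum_neg hb hν ht x hx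
    intro hzero
    rw [neg_eq_zero] at hzero
    linarith
  rw [integral_neg] at hpos
  linarith


/-- Reduction of the squared bubble to `g`. -/
lemma ueps_sq {ε : ℝ} (hε : 0 < ε) (x₀ x : E4) :
    Ueps ε x₀ x ^ 2 = c4 ^ 2 * ε ^ 2 * g (ε ^ 2) (x - x₀) := by
  have hnorm : ‖ε⁻¹ • (x - x₀)‖ ^ 2 = (ε ^ 2)⁻¹ * ‖x - x₀‖ ^ 2 := by
    rw [norm_smul, Real.norm_eq_abs, mul_pow, sq_abs]
    ring
  rw [Ueps, Ubub, g, hnorm]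
  have h1 : (0:ℝ) < ε ^ 2 + ‖x - x₀‖ ^ 2 := by positivity
  have h2 : ε ≠ 0 := ne_of_gt hε
  field_simp

end Stmt4Aux

/-- The interaction term `c(t) = ∫ U_{ε,tν}² U_{ε,-tν}²` is differentiable with
negative derivative for every `t > 0`, and is strictly decreasing on `[0, ∞)`. -/
theorem stmt4 (ε : ℝ) (hε : 0 < ε) (ν : E4) (hν : ‖ν‖ = 1) :
    (∀ t : ℝ, 0 < t →
      DifferentiableAt ℝ (fun s : ℝ => ∫ x : E4, Ueps ε (s • ν) x ^ 2 * Ueps ε (-(s • ν)) x ^ 2) t ∧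
      deriv (fun s : ℝ => ∫ x : E4, Ueps ε (s • ν) x ^ 2 * Ueps ε (-(s • ν)) x ^ 2) t < 0) ∧
    StrictAntiOn (fun s : ℝ => ∫ x : E4, Ueps ε (s • ν) x ^ 2 * Ueps ε (-(s • ν)) x ^ 2)
      (Set.Ici 0) := by
  classical
  set b : ℝ := ε ^ 2 with hbdef
  have hb : 0 < b := by positivity
  have hpi := Real.pi_pos
  have hc4 : 0 < c4 := by
    rw [c4]
    exact Real.rpow_pos_of_pos (by positivity) _
  have hK : 0 < c4 ^ 4 * ε ^ 4 := mul_pos (pow_pos hc4 4) (pow_pos hε 4)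
  have hfun : (fun s : ℝ => ∫ x : E4, Ueps ε (s • ν) x ^ 2 * Ueps ε (-(s • ν)) x ^ 2)
      = fun s : ℝ => (c4 ^ 4 * ε ^ 4) *
        ∫ x : E4, Stmt4Aux.g b (x - s • ν) * Stmt4Aux.g b (x + s • ν) := by
    funext s
    rw [← integral_const_mul]
    refine integral_congr_ae (Filter.Eventually.of_forall fun x => ?_)
    show Ueps ε (s • ν) x ^ 2 * Ueps ε (-(s • ν)) x ^ 2 =
      c4 ^ 4 * ε ^ 4 * (Stmt4Aux.g b (x - s • ν) * Stmt4Aux.g b (x + s • ν))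
    rw [Stmt4Aux.ueps_sq hε, Stmt4Aux.ueps_sq hε,
      show x - -(s • ν) = x + s • ν from sub_neg_eq_add x _]
    ring
  have hder : ∀ t : ℝ, HasDerivAt
      (fun s : ℝ => ∫ x : E4, Ueps ε (s • ν) x ^ 2 * Ueps ε (-(s • ν)) x ^ 2)
      ((c4 ^ 4 * ε ^ 4) * ∫ x : E4, Stmt4Aux.Fd b ν t x) t := by
    intro t
    rw [hfun]
    exact (Stmt4Aux.J_hasDerivAt hb hν t).const_mul _
  constructor
  · intro t ht
    refine ⟨(hder t).differentiableAt, ?_⟩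
    rw [(hder t).deriv]
    exact mul_neg_of_pos_of_neg hK (Stmt4Aux.int_Fd_neg hb hν ht)
  · refine strictAntiOn_of_deriv_neg (convex_Ici 0) ?_ ?_
    · have hdiff : Differentiable ℝ
          (fun s : ℝ => ∫ x : E4, Ueps ε (s • ν) x ^ 2 * Ueps ε (-(s • ν)) x ^ 2) :=
        fun t => (hder t).differentiableAt
      exact hdiff.continuous.continuousOn
    · intro t ht
      rw [interior_Ici] at ht
      rw [(hder t).deriv]
      exact mul_neg_of_pos_of_neg hK (Stmt4Aux.int_Fd_neg hb hν ht)
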